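/- For every fixed integer K ≥ 2, the sequence a_n := C(n, K+1) · (1/C(n−1, K))^{K+1} · (C(n−K−2, K)/C(n−1, K))^{n−K−1}, multiplied by n^{K^2−1}, converges as n → ∞ to (K!)^K · e^{−K(K+1)} / (K+1). -/

import Mathlib

set_option maxHeartbeats 1600000

open Filter Finset Topology

private lemma cast_choose_prod (n k : ℕ) (h : k ≤ n) :
    (n.choose k : ℝ) = (∏ i ∈ Finset.range k, ((n : ℝ) - i)) / (Nat.factorial k : ℝ) := by
  have h1 : ((n.descFactorial k : ℕ) : ℝ) = ∏ i ∈ Finset.range k, ((n : ℝ) - i) := by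
    rw [Nat.descFactorial_eq_prod_range, Nat.cast_prod]
    refine Finset.prod_congr rfl fun i hi => ?_
    have : i ≤ n := le_trans (Nat.le_of_lt (Finset.mem_range.mp hi)) h
    rw [Nat.cast_sub this]
  have h2 : n.descFactorial k = Nat.factorial k * n.choose k :=
    Nat.descFactorial_eq_factorial_mul_choose n k
  have hf : (Nat.factorial k : ℝ) ≠ 0 := Nat.cast_ne_zero.mpr (Nat.factorial_ne_zero k)
  rw [eq_div_iff hf, ← h1, h2]
  push_cast
  ring

private lemma tendsto_shift_atTop (c : ℝ) :
    Tendsto (fun n : ℕ => (n : ℝ) - c) atTop atTop := by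
  simpa [sub_eq_add_neg] using
    tendsto_atTop_add_const_right atTop (-c) tendsto_natCast_atTop_atTop

private lemma lim_one_plus (t c : ℝ) :
    Tendsto (fun n : ℕ => (1 + t / ((n : ℝ) - c)) ^ n) atTop (𝓝 (Real.exp t)) := by
  have hshift := tendsto_shift_atTop c
  have h1 : Tendsto (fun n : ℕ => ((n : ℝ) - c) * Real.log (1 + t / ((n : ℝ) - c)))
      atTop (𝓝 t) := (Real.tendsto_mul_log_one_add_div_atTop t).comp hshift
  have h2 : Tendsto (fun n : ℕ => (n : ℝ) / ((n : ℝ) - c)) atTop (𝓝 1) := by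
    have hz : Tendsto (fun n : ℕ => 1 + c / ((n : ℝ) - c)) atTop (𝓝 (1 + 0)) :=
      tendsto_const_nhds.add (Filter.Tendsto.const_div_atTop hshift c)
    rw [add_zero] at hz
    refine hz.congr' ?_
    filter_upwards [hshift.eventually_gt_atTop 0] with n hn
    field_simp
    ring
  have h3 : Tendsto (fun n : ℕ => (n : ℝ) * Real.log (1 + t / ((n : ℝ) - c)))
      atTop (𝓝 t) := by
    have hm := h2.mul h1
    rw [one_mul] at hm
    refine hm.congr' ?_
    filter_upwards [hshift.eventually_gt_atTop 0] with n hn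
    field_simp
  have h4 := (Real.continuous_exp.tendsto t).comp h3
  refine h4.congr' ?_
  filter_upwards [hshift.eventually_ge_atTop (|t| + 1)] with n hn
  have h0 : (0 : ℝ) < (n : ℝ) - c := by have := abs_nonneg t; linarith
  have hb : (0 : ℝ) < 1 + t / ((n : ℝ) - c) := by
    have h5 : -t < (n : ℝ) - c := by have := neg_le_abs t; linarith
    have h6 : -t / ((n : ℝ) - c) < 1 := (div_lt_one h0).mpr h5
    rw [neg_div] at h6; linarith
  show Real.exp ((n : ℝ) * Real.log (1 + t / ((n : ℝ) - c))) = _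
  rw [Real.exp_nat_mul, Real.exp_log hb]

private lemma ratio_pow (c a : ℝ) (m : ℕ) :
    Tendsto (fun n : ℕ => (((n : ℝ) - c - a) / ((n : ℝ) - c)) ^ (n - m)) atTop
      (𝓝 (Real.exp (-a))) := by
  have hshift := tendsto_shift_atTop c
  have hbase : Tendsto (fun n : ℕ => ((n : ℝ) - c - a) / ((n : ℝ) - c)) atTop (𝓝 1) := by
    have hz : Tendsto (fun n : ℕ => 1 - a / ((n : ℝ) - c)) atTop (𝓝 (1 - 0)) :=
      tendsto_const_nhds.sub (Filter.Tendsto.const_div_atTop hshift a)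
    rw [sub_zero] at hz
    refine hz.congr' ?_
    filter_upwards [hshift.eventually_gt_atTop 0] with n hn
    have hne : (n : ℝ) - c ≠ 0 := ne_of_gt hn
    field_simp
  have hpn : Tendsto (fun n : ℕ => (((n : ℝ) - c - a) / ((n : ℝ) - c)) ^ n) atTop
      (𝓝 (Real.exp (-a))) := by
    refine (lim_one_plus (-a) c).congr' ?_
    filter_upwards [hshift.eventually_gt_atTop 0] with n hn
    have hne : (n : ℝ) - c ≠ 0 := ne_of_gt hn
    congr 1
    field_simp
    ring
  have hpm : Tendsto (fun n : ℕ => (((n : ℝ) - c - a) / ((n : ℝ) - c)) ^ m) atTop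
      (𝓝 (1 : ℝ)) := by
    simpa using hbase.pow m
  have hdiv := hpn.mul (hpm.inv₀ one_ne_zero)
  rw [inv_one, mul_one] at hdiv
  refine hdiv.congr' ?_
  filter_upwards [hshift.eventually_gt_atTop (|a| + 1), eventually_ge_atTop m] with n hn hm
  have h0 : (0 : ℝ) < (n : ℝ) - c := by have := abs_nonneg a; linarith
  have hb0 : ((n : ℝ) - c - a) / ((n : ℝ) - c) ≠ 0 := by
    have hna : (0:ℝ) < (n : ℝ) - c - a := by have := le_abs_self a; linarith
    positivity
  rw [pow_sub₀ _ hb0 hm]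

theorem expected_isolated_limit (K : ℕ) (hK : 2 ≤ K) :
    Filter.Tendsto
      (fun n : ℕ =>
        (n : ℝ) ^ (K ^ 2 - 1) *
          ((n.choose (K + 1) : ℝ) * (1 / ((n - 1).choose K : ℝ)) ^ (K + 1) *
            (((n - K - 2).choose K : ℝ) / ((n - 1).choose K : ℝ)) ^ (n - K - 1)))
      Filter.atTop
      (nhds ((Nat.factorial K : ℝ) ^ K * Real.exp (-(K : ℝ) * ((K : ℝ) + 1)) / ((K : ℝ) + 1))) := by
  set C : ℝ := (Nat.factorial K : ℝ) ^ (K + 1) / (Nat.factorial (K + 1) : ℝ) with hC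
  have hA : Tendsto (fun n : ℕ => ∏ i ∈ Finset.range (K + 1), (1 - (i : ℝ) / (n : ℝ)))
      atTop (𝓝 1) := by
    have := tendsto_finset_prod (f := fun (i : ℕ) (n : ℕ) => 1 - (i : ℝ) / (n : ℝ))
      (a := fun _ => (1 : ℝ)) (x := atTop) (Finset.range (K + 1)) (fun i _ => by
        simpa using tendsto_const_nhds.sub (tendsto_const_div_atTop_nhds_zero_nat (i : ℝ)))
    simpa using this
  have hB : Tendsto (fun n : ℕ => ∏ i ∈ Finset.range K, (1 - (1 + (i : ℝ)) / (n : ℝ)))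
      atTop (𝓝 1) := by
    have := tendsto_finset_prod (f := fun (i : ℕ) (n : ℕ) => 1 - (1 + (i : ℝ)) / (n : ℝ))
      (a := fun _ => (1 : ℝ)) (x := atTop) (Finset.range K) (fun i _ => by
        simpa using tendsto_const_nhds.sub (tendsto_const_div_atTop_nhds_zero_nat (1 + (i : ℝ))))
    simpa using this
  have hE : Tendsto (fun n : ℕ => ∏ i ∈ Finset.range K,
      (((n : ℝ) - (1 + (i : ℝ)) - ((K : ℝ) + 1)) / ((n : ℝ) - (1 + (i : ℝ)))) ^ (n - (K + 1)))
      atTop (𝓝 (Real.exp (-((K : ℝ) + 1)) ^ K)) := by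
    have := tendsto_finset_prod
      (f := fun (i : ℕ) (n : ℕ) =>
        (((n : ℝ) - (1 + (i : ℝ)) - ((K : ℝ) + 1)) / ((n : ℝ) - (1 + (i : ℝ)))) ^ (n - (K + 1)))
      (a := fun _ => Real.exp (-((K : ℝ) + 1))) (x := atTop) (Finset.range K)
      (fun i _ => ratio_pow (1 + (i : ℝ)) ((K : ℝ) + 1) (K + 1))
    simpa using this
  have hBp : Tendsto (fun n : ℕ =>
      (∏ i ∈ Finset.range K, (1 - (1 + (i : ℝ)) / (n : ℝ))) ^ (K + 1)) atTop (𝓝 1) := by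
    simpa using hB.pow (K + 1)
  have hgl := (tendsto_const_nhds (x := C)).mul ((hA.div hBp one_ne_zero).mul hE)
  have heq : C * ((1 : ℝ) / 1 * Real.exp (-((K : ℝ) + 1)) ^ K) =
      (Nat.factorial K : ℝ) ^ K * Real.exp (-(K : ℝ) * ((K : ℝ) + 1)) / ((K : ℝ) + 1) := by
    rw [hC, ← Real.exp_nat_mul]
    have hfs : (Nat.factorial (K + 1) : ℝ) = ((K : ℝ) + 1) * (Nat.factorial K : ℝ) := by
      rw [Nat.factorial_succ]; push_cast; ring
    rw [hfs]
    have h1 : (Nat.factorial K : ℝ) ≠ 0 := Nat.cast_ne_zero.mpr (Nat.factorial_ne_zero K)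
    have h2 : ((K : ℝ) + 1) ≠ 0 := by positivity
    have h3 : (K : ℝ) * -((K : ℝ) + 1) = -(K : ℝ) * ((K : ℝ) + 1) := by ring
    rw [h3]
    field_simp
    ring
  rw [heq] at hgl
  refine hgl.congr' ?_
  filter_upwards [eventually_ge_atTop (2 * K + 3)] with n hn
  -- notation
  have hxpos : (0 : ℝ) < (n : ℝ) := by
    have h0 : 0 < n := by omega
    exact_mod_cast h0
  have hx0 : ((n : ℝ)) ≠ 0 := ne_of_gt hxpos
  have hxK : (2 * (K : ℝ) + 3) ≤ (n : ℝ) := by exact_mod_cast hn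
  have hKr : (2 : ℝ) ≤ (K : ℝ) := by exact_mod_cast hK
  have hc1 : (n.choose (K + 1) : ℝ) =
      (∏ i ∈ Finset.range (K + 1), ((n : ℝ) - i)) / (Nat.factorial (K + 1) : ℝ) :=
    cast_choose_prod n (K + 1) (by omega)
  have hcast1 : (((n - 1 : ℕ)) : ℝ) = (n : ℝ) - 1 := by
    rw [Nat.cast_sub (by omega)]; norm_num
  have hcast2 : (((n - K - 2 : ℕ)) : ℝ) = (n : ℝ) - (K : ℝ) - 2 := by
    rw [Nat.cast_sub (by omega), Nat.cast_sub (by omega)]; norm_num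
  have hc2 : (((n - 1).choose K : ℕ) : ℝ) =
      (∏ i ∈ Finset.range K, ((n : ℝ) - 1 - i)) / (Nat.factorial K : ℝ) := by
    rw [cast_choose_prod (n - 1) K (by omega), hcast1]
  have hc3 : (((n - K - 2).choose K : ℕ) : ℝ) =
      (∏ i ∈ Finset.range K, ((n : ℝ) - (K : ℝ) - 2 - i)) / (Nat.factorial K : ℝ) := by
    rw [cast_choose_prod (n - K - 2) K (by omega), hcast2]
  have hfK : (Nat.factorial K : ℝ) ≠ 0 := Nat.cast_ne_zero.mpr (Nat.factorial_ne_zero K)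
  have hfK1 : (Nat.factorial (K + 1) : ℝ) ≠ 0 := Nat.cast_ne_zero.mpr (Nat.factorial_ne_zero _)
  have hfac2 : ∀ i ∈ Finset.range K, (0 : ℝ) < (n : ℝ) - 1 - i := by
    intro i hi
    have hi' : (i : ℝ) < K := by exact_mod_cast Finset.mem_range.mp hi
    linarith
  have hP2ne : (∏ i ∈ Finset.range K, ((n : ℝ) - 1 - i)) ≠ 0 :=
    Finset.prod_ne_zero_iff.mpr fun i hi => ne_of_gt (hfac2 i hi)
  -- factor out powers of n
  have hP1 : (∏ i ∈ Finset.range (K + 1), ((n : ℝ) - i)) =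
      (n : ℝ) ^ (K + 1) * ∏ i ∈ Finset.range (K + 1), (1 - (i : ℝ) / (n : ℝ)) := by
    calc (∏ i ∈ Finset.range (K + 1), ((n : ℝ) - i))
        = ∏ i ∈ Finset.range (K + 1), ((n : ℝ) * (1 - (i : ℝ) / (n : ℝ))) :=
          Finset.prod_congr rfl fun i _ => by field_simp
      _ = (∏ _i ∈ Finset.range (K + 1), (n : ℝ)) *
            ∏ i ∈ Finset.range (K + 1), (1 - (i : ℝ) / (n : ℝ)) := Finset.prod_mul_distrib
      _ = (n : ℝ) ^ (K + 1) * ∏ i ∈ Finset.range (K + 1), (1 - (i : ℝ) / (n : ℝ)) := by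
          rw [Finset.prod_const, Finset.card_range]
  have hP2 : (∏ i ∈ Finset.range K, ((n : ℝ) - 1 - i)) =
      (n : ℝ) ^ K * ∏ i ∈ Finset.range K, (1 - (1 + (i : ℝ)) / (n : ℝ)) := by
    calc (∏ i ∈ Finset.range K, ((n : ℝ) - 1 - i))
        = ∏ i ∈ Finset.range K, ((n : ℝ) * (1 - (1 + (i : ℝ)) / (n : ℝ))) :=
          Finset.prod_congr rfl fun i _ => by field_simp; ring
      _ = (∏ _i ∈ Finset.range K, (n : ℝ)) *
            ∏ i ∈ Finset.range K, (1 - (1 + (i : ℝ)) / (n : ℝ)) := Finset.prod_mul_distrib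
      _ = (n : ℝ) ^ K * ∏ i ∈ Finset.range K, (1 - (1 + (i : ℝ)) / (n : ℝ)) := by
          rw [Finset.prod_const, Finset.card_range]
  have hB0 : (∏ i ∈ Finset.range K, (1 - (1 + (i : ℝ)) / (n : ℝ))) ≠ 0 := by
    intro h
    apply hP2ne
    rw [hP2, h, mul_zero]
  have harith : K * (K + 1) = K ^ 2 - 1 + (K + 1) := by
    have h2 : K ^ 2 = K * K := by ring
    have h3 : K * (K + 1) = K * K + K := by ring
    rw [h2, h3]
    have h1 : 1 * 1 ≤ K * K := Nat.mul_le_mul (by omega) (by omega)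
    rw [one_mul] at h1
    generalize K * K = u at h1 ⊢
    omega
  simp only [Pi.div_apply]
  rw [hc1, hc2, hc3]
  have hEeq : (((∏ i ∈ Finset.range K, ((n : ℝ) - (K : ℝ) - 2 - i)) / (Nat.factorial K : ℝ)) /
        ((∏ i ∈ Finset.range K, ((n : ℝ) - 1 - i)) / (Nat.factorial K : ℝ))) ^ (n - K - 1) =
      ∏ i ∈ Finset.range K,
        (((n : ℝ) - (1 + (i : ℝ)) - ((K : ℝ) + 1)) / ((n : ℝ) - (1 + (i : ℝ)))) ^ (n - (K + 1)) := by
    have hr : ((∏ i ∈ Finset.range K, ((n : ℝ) - (K : ℝ) - 2 - i)) / (Nat.factorial K : ℝ)) /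
        ((∏ i ∈ Finset.range K, ((n : ℝ) - 1 - i)) / (Nat.factorial K : ℝ)) =
        ∏ i ∈ Finset.range K,
          (((n : ℝ) - (1 + (i : ℝ)) - ((K : ℝ) + 1)) / ((n : ℝ) - (1 + (i : ℝ)))) := by
      rw [div_div_div_comm, div_self hfK, div_one, ← Finset.prod_div_distrib]
      exact Finset.prod_congr rfl fun i _ => by ring_nf
    rw [hr, Nat.sub_sub]
    exact (Finset.prod_pow _ _ _).symm
  rw [hEeq]
  have key : C * ((∏ i ∈ Finset.range (K + 1), (1 - (i : ℝ) / (n : ℝ))) /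
        (∏ i ∈ Finset.range K, (1 - (1 + (i : ℝ)) / (n : ℝ))) ^ (K + 1)) =
      (n : ℝ) ^ (K ^ 2 - 1) *
        (((∏ i ∈ Finset.range (K + 1), ((n : ℝ) - i)) / (Nat.factorial (K + 1) : ℝ)) *
          (1 / ((∏ i ∈ Finset.range K, ((n : ℝ) - 1 - i)) / (Nat.factorial K : ℝ))) ^ (K + 1)) := by
    rw [hP1, hP2, hC, one_div_div]
    rw [div_pow, mul_pow, ← pow_mul]
    have hxsplit : (n : ℝ) ^ (K * (K + 1)) = (n : ℝ) ^ (K ^ 2 - 1) * (n : ℝ) ^ (K + 1) := by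
      rw [harith, pow_add]
    rw [hxsplit]
    field_simp
  rw [← mul_assoc, ← mul_assoc, key]
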